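/- Let K be a finite extension of Q_p with residue field of cardinality q, normalized valuation v_P, and let f be an Eisenstein polynomial of degree n over K whose ramification polygon R passes through the points (1, J_0), (p^{s_1}, J_1), ..., (p^{s_{u-1}}, J_{u-1}), (p^{s_u}, 0), where J_t = a_t·n + b_t with 0 ≤ b_t ≤ n−1. Then for each 0 ≤ t ≤ u and each index i with p^{s_t} ≤ i ≤ n−1: v_P(f_i) ≥ 2 + a_t − v_P(C(i, p^{s_t})) if p^{s_t} ≤ i < b_t, and v_P(f_i) ≥ 1 + a_t − v_P(C(i, p^{s_t})) if i ≥ b_t; moreover if b_t ≠ 0 then v_P(f_{b_t}) = 1 + a_t − v_P(C(b_t, p^{s_t})). -/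

import Mathlib

open Polynomial

/-- An additive valuation `v` (written additively, with `v 0 = ⊤`) on a field `Ω`,
extending the `p`-adic valuation of `ℚ_[p]` (scaled by the ramification index `e`),
taking integer values on an intermediate field `K` and normalized so that a
uniformizer `unif` of `K` has valuation `1`. -/
structure PadicSetup (p : ℕ) [Fact p.Prime] (K Ω : Type*) [Field K] [Field Ω]
    [Algebra ℚ_[p] K] [Algebra ℚ_[p] Ω] [Algebra K Ω] [IsScalarTower ℚ_[p] K Ω] where
  v : Ω → WithTop ℚ
  v_top_iff : ∀ x : Ω, v x = ⊤ ↔ x = 0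
  v_mul : ∀ x y : Ω, v (x * y) = v x + v y
  v_add : ∀ x y : Ω, min (v x) (v y) ≤ v (x + y)
  e : ℕ
  e_pos : 0 < e
  v_padic : ∀ x : ℚ_[p], x ≠ 0 →
    v (algebraMap ℚ_[p] Ω x) = (((e : ℤ) * x.valuation : ℤ) : ℚ)
  v_int : ∀ x : K, x ≠ 0 → ∃ m : ℤ, v (algebraMap K Ω x) = ((m : ℚ) : WithTop ℚ)
  unif : K
  v_unif : v (algebraMap K Ω unif) = 1

variable {p : ℕ} [Fact p.Prime] {K Ω : Type*} [Field K] [Field Ω]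
    [Algebra ℚ_[p] K] [Algebra ℚ_[p] Ω] [Algebra K Ω] [IsScalarTower ℚ_[p] K Ω]

/-- `f` is an Eisenstein polynomial of degree `n` over `K` (with respect to the
normalized valuation of `K`): monic of degree `n`, all lower coefficients have
valuation at least `1`, and the constant coefficient has valuation exactly `1`. -/
def PadicSetup.IsEisensteinOfDegree (S : PadicSetup p K Ω) (f : K[X]) (n : ℕ) : Prop :=
  f.Monic ∧ f.natDegree = n ∧ (∀ i < n, 1 ≤ S.v (algebraMap K Ω (f.coeff i))) ∧
    S.v (algebraMap K Ω (f.coeff 0)) = 1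

/-- The `i`-th coefficient of the ramification polynomial `ρ(x) = f(αx+α)/αⁿ` of `f`,
namely `ρ_i = ∑_{k=i}^n C(k,i) f_k α^{k-n}`. -/
noncomputable def PadicSetup.rho (S : PadicSetup p K Ω) (f : K[X]) (n : ℕ) (α : Ω)
    (i : ℕ) : Ω :=
  ∑ k ∈ Finset.Icc i n, (k.choose i : Ω) * algebraMap K Ω (f.coeff k) * α ^ ((k : ℤ) - (n : ℤ))

namespace PadicSetup
variable {p : ℕ} [Fact p.Prime] {K Ω : Type*} [Field K] [Field Ω]
    [Algebra ℚ_[p] K] [Algebra ℚ_[p] Ω] [Algebra K Ω] [IsScalarTower ℚ_[p] K Ω]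
variable (S : PadicSetup p K Ω)

lemma v_ne_top {x : Ω} (hx : x ≠ 0) : S.v x ≠ ⊤ := fun h => hx ((S.v_top_iff x).1 h)

lemma exists_rat {x : Ω} (hx : x ≠ 0) : ∃ q : ℚ, S.v x = (q : WithTop ℚ) := by
  cases h : S.v x with
  | top => exact absurd h (S.v_ne_top hx)
  | coe q => exact ⟨q, rfl⟩

lemma v_one : S.v 1 = 0 := by
  obtain ⟨q, hq⟩ := S.exists_rat (one_ne_zero (α := Ω))
  have := S.v_mul 1 1
  rw [mul_one, hq, ← WithTop.coe_add] at this
  have : q = q + q := by exact_mod_cast this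
  have : q = 0 := by linarith
  rw [hq, this]; rfl

lemma v_neg (x : Ω) : S.v (-x) = S.v x := by
  have h1 : S.v (-1 : Ω) = 0 := by
    obtain ⟨q, hq⟩ := S.exists_rat (neg_ne_zero.2 (one_ne_zero (α := Ω)))
    have := S.v_mul (-1) (-1)
    rw [neg_mul_neg, one_mul, S.v_one, hq, ← WithTop.coe_add] at this
    have h : (0 : ℚ) = q + q := by exact_mod_cast this
    have : q = 0 := by linarith
    rw [hq, this]; rfl
  calc S.v (-x) = S.v ((-1) * x) := by rw [neg_one_mul]
    _ = S.v x := by rw [S.v_mul, h1, zero_add]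

lemma v_inv {x : Ω} {q : ℚ} (hx : x ≠ 0) (h : S.v x = (q : WithTop ℚ)) :
    S.v x⁻¹ = ((-q : ℚ) : WithTop ℚ) := by
  have := S.v_mul x x⁻¹
  rw [mul_inv_cancel₀ hx, S.v_one, h] at this
  obtain ⟨r, hr⟩ := S.exists_rat (inv_ne_zero hx)
  rw [hr, ← WithTop.coe_add] at this
  have : (0:ℚ) = q + r := by exact_mod_cast this
  have : r = -q := by linarith
  rw [hr, this]

lemma v_pow {x : Ω} {q : ℚ} (h : S.v x = (q : WithTop ℚ)) (m : ℕ) :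
    S.v (x ^ m) = ((m * q : ℚ) : WithTop ℚ) := by
  induction m with
  | zero => simp [S.v_one]
  | succ k ih =>
      rw [pow_succ, S.v_mul, ih, h, ← WithTop.coe_add]
      congr 1
      push_cast
      ring

lemma v_zpow {x : Ω} {q : ℚ} (hx : x ≠ 0) (h : S.v x = (q : WithTop ℚ)) (z : ℤ) :
    S.v (x ^ z) = ((z * q : ℚ) : WithTop ℚ) := by
  cases z with
  | ofNat m => rw [Int.ofNat_eq_coe, zpow_natCast, S.v_pow h]; norm_num
  | negSucc m =>
      rw [zpow_negSucc, S.v_inv (pow_ne_zero _ hx) (S.v_pow h (m+1))]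
      congr 1
      push_cast
      ring

lemma v_sum_le {ι : Type*} (t : Finset ι) (g : ι → Ω) :
    t.inf (fun i => S.v (g i)) ≤ S.v (∑ i ∈ t, g i) := by
  classical
  induction t using Finset.cons_induction with
  | empty => simp [(S.v_top_iff 0).2 rfl]
  | cons a t ha ih =>
      rw [Finset.sum_cons, Finset.inf_cons]
      exact le_trans (min_le_min le_rfl ih) (S.v_add _ _)

lemma v_sum_eq {ι : Type*} (t : Finset ι) (g : ι → Ω) (k0 : ι) (hk0 : k0 ∈ t)
    (hfin : S.v (g k0) ≠ ⊤)
    (hmin : ∀ j ∈ t, j ≠ k0 → S.v (g k0) < S.v (g j)) :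
    S.v (∑ i ∈ t, g i) = S.v (g k0) := by
  classical
  have hrest : S.v (g k0) < S.v (∑ i ∈ t.erase k0, g i) := by
    refine lt_of_lt_of_le ?_ (S.v_sum_le _ g)
    rw [Finset.lt_inf_iff (lt_top_iff_ne_top.2 hfin)]
    intro j hj
    exact hmin j (Finset.mem_of_mem_erase hj) (Finset.ne_of_mem_erase hj)
  have hsplit : ∑ i ∈ t, g i = g k0 + ∑ i ∈ t.erase k0, g i :=
    (Finset.add_sum_erase t g hk0).symm
  refine le_antisymm ?_ ?_
  · by_contra hlt
    push_neg at hlt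
    have h2 : S.v (g k0) = S.v (∑ i ∈ t, g i + -(∑ i ∈ t.erase k0, g i)) := by
      rw [hsplit]; ring_nf
    have := S.v_add (∑ i ∈ t, g i) (-(∑ i ∈ t.erase k0, g i))
    rw [← h2, S.v_neg] at this
    rcases min_le_iff.1 this with h | h
    · exact absurd h (not_le.2 hlt)
    · exact absurd h (not_le.2 hrest)
  · rw [hsplit]
    refine le_trans ?_ (S.v_add _ _)
    exact le_min le_rfl hrest.le



lemma v_alpha {f : K[X]} {n : ℕ} (hn : 0 < n) (hf : S.IsEisensteinOfDegree f n)
    {α : Ω} (hα : aeval α f = 0) : α ≠ 0 ∧ S.v α = ((1/n : ℚ) : WithTop ℚ) := by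
  obtain ⟨hmon, hdeg, hcoef, hc0⟩ := hf
  have hf0 : algebraMap K Ω (f.coeff 0) ≠ 0 := by
    intro h
    have h2 : S.v (algebraMap K Ω (f.coeff 0)) = ⊤ := (S.v_top_iff _).2 h
    rw [hc0] at h2
    exact (by simp : (1 : WithTop ℚ) ≠ ⊤) h2
  have hαne : α ≠ 0 := by
    rintro rfl
    rw [aeval_def, eval₂_at_zero] at hα
    exact hf0 hα
  obtain ⟨c, hc⟩ := S.exists_rat hαne
  refine ⟨hαne, ?_⟩
  set g : ℕ → Ω := fun i => algebraMap K Ω (f.coeff i) * α ^ i with hg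
  have hsum : (0 : Ω) = ∑ i ∈ Finset.range (n+1), g i := by
    rw [← hα, Polynomial.aeval_eq_sum_range' (show f.natDegree < n+1 by omega)]
    exact Finset.sum_congr rfl fun i _ => by rw [hg]; simp [Algebra.smul_def]
  have hvg : ∀ i, S.v (g i) = S.v (algebraMap K Ω (f.coeff i)) + ((i * c : ℚ) : WithTop ℚ) := by
    intro i
    rw [hg]
    simp only
    rw [S.v_mul, S.v_pow hc]
  have hvgn : S.v (g n) = ((n * c : ℚ) : WithTop ℚ) := by
    have h1 : f.coeff n = 1 := by rw [← hdeg]; exact hmon.coeff_natDegree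
    rw [hvg, h1, map_one, S.v_one, zero_add]
  have hvglow : ∀ j < n, ((1 + j * c : ℚ) : WithTop ℚ) ≤ S.v (g j) := by
    intro j hj
    rw [hvg]
    have h1 : ((1:ℚ) : WithTop ℚ) ≤ S.v (algebraMap K Ω (f.coeff j)) := by
      rw [WithTop.coe_one]; exact hcoef j hj
    calc ((1 + j * c : ℚ) : WithTop ℚ) = ((1:ℚ) : WithTop ℚ) + ((j * c : ℚ) : WithTop ℚ) := by
          rw [← WithTop.coe_add]
      _ ≤ _ := add_le_add_left h1 _
  have htop : S.v 0 = ⊤ := (S.v_top_iff 0).2 rfl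
  rcases lt_trichotomy ((n:ℚ) * c) 1 with hlt | heq | hgt
  · exfalso
    have heq2 : S.v (∑ i ∈ Finset.range (n+1), g i) = ((n * c : ℚ) : WithTop ℚ) := by
      refine (S.v_sum_eq _ g n (Finset.self_mem_range_succ n) (by rw [hvgn]; exact WithTop.coe_ne_top) ?_).trans hvgn
      intro j hj hjn
      have hjlt : j < n := by
        have := Finset.mem_range.1 hj; omega
      rw [hvgn]
      refine lt_of_lt_of_le ?_ (hvglow j hjlt)
      rw [WithTop.coe_lt_coe]
      have hjn' : (j:ℚ) ≤ (n:ℚ) := by exact_mod_cast hjlt.le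
      rcases le_or_gt c 0 with h0 | h0
      · nlinarith
      · nlinarith
    rw [← hsum, htop] at heq2
    exact WithTop.top_ne_coe heq2
  · have : c = 1 / n := by
      field_simp
      linarith [heq]
    rw [hc, this]
  · exfalso
    have hcpos : 0 < c := by
      rcases le_or_gt c 0 with h0 | h0
      · exfalso
        have : (n:ℚ) * c ≤ 0 := mul_nonpos_of_nonneg_of_nonpos (by positivity) h0
        linarith
      · exact h0
    have hvg0 : S.v (g 0) = ((1:ℚ) : WithTop ℚ) := by
      rw [hvg, hc0]
      simp
    have heq2 : S.v (∑ i ∈ Finset.range (n+1), g i) = ((1 : ℚ) : WithTop ℚ) := by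
      refine (S.v_sum_eq _ g 0 (Finset.mem_range.2 (Nat.succ_pos n)) (by
        rw [hvg0]; exact WithTop.coe_ne_top) ?_).trans hvg0
      intro j hj hj0
      rw [hvg0]
      rcases eq_or_lt_of_le (show j ≤ n from by have := Finset.mem_range.1 hj; omega) with rfl | hjlt
      · rw [hvgn, WithTop.coe_lt_coe]; linarith
      · refine lt_of_lt_of_le ?_ (hvglow j hjlt)
        rw [WithTop.coe_lt_coe]
        have : (0:ℚ) < j := by
          have : 0 < j := Nat.pos_of_ne_zero hj0
          exact_mod_cast this
        nlinarith
    rw [← hsum, htop] at heq2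
    exact WithTop.top_ne_coe heq2


lemma int_mul_aux {n D c : ℤ} (hn : 0 < n) (h : n * D = c) (h1 : -n < c) (h2 : c < n) :
    c = 0 := by
  rcases lt_trichotomy D 0 with hD | hD | hD
  · have : n * D ≤ n * (-1) := mul_le_mul_of_nonneg_left (by omega) hn.le
    omega
  · rw [hD] at h; omega
  · have : n * 1 ≤ n * D := mul_le_mul_of_nonneg_left (by omega) hn.le
    omega

lemma int_lt_aux {n X c : ℤ} (hn : 0 < n) (h : n * c < n * X) : c + 1 ≤ X := by
  by_contra h'
  push_neg at h'
  have : n * X ≤ n * c := mul_le_mul_of_nonneg_left (by omega) hn.le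
  omega

lemma core (S : PadicSetup p K Ω) (w : ℕ → ℤ)
    (hw : ∀ m : ℕ, 0 < m → ((w m : ℚ) : WithTop ℚ) = S.v (algebraMap K Ω (m : K)))
    {f : K[X]} {n : ℕ} (hn : 0 < n) (hf : S.IsEisensteinOfDegree f n)
    {α : Ω} (hα : aeval α f = 0)
    (P : ℕ) (hP : 0 < P) (J a b : ℕ) (hJ : J = a * n + b) (hb : b ≤ n - 1)
    (hpt : ((n : ℚ) : WithTop ℚ) * S.v (S.rho f n α P) = ((J : ℚ) : WithTop ℚ)) :
    (∀ i, P ≤ i → i ≤ n - 1 →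
      (i < b → ((((2 + (a : ℤ) - w (i.choose P) : ℤ) : ℚ)) : WithTop ℚ)
          ≤ S.v (algebraMap K Ω (f.coeff i)))
      ∧ (b ≤ i → ((((1 + (a : ℤ) - w (i.choose P) : ℤ) : ℚ)) : WithTop ℚ)
          ≤ S.v (algebraMap K Ω (f.coeff i))))
    ∧ (b ≠ 0 → S.v (algebraMap K Ω (f.coeff b)) =
        ((((1 + (a : ℤ) - w (b.choose P) : ℤ) : ℚ)) : WithTop ℚ)) := by
  obtain ⟨hαne, hcα⟩ := S.v_alpha hn hf hα
  have hnQ : (n : ℚ) ≠ 0 := Nat.cast_ne_zero.2 hn.ne'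
  have key : ∀ (W M : ℤ) (x : ℕ),
      (n : ℚ) * ((W : ℚ) + (M : ℚ) + ((x : ℚ) - (n : ℚ)) * (1/n))
        = (n : ℚ) * ((W : ℚ) + (M : ℚ)) + (x : ℚ) - (n : ℚ) := by
    intro W M x
    field_simp
    ring
  have hJ' : (J : ℚ) = (a : ℚ) * n + (b : ℚ) := by exact_mod_cast hJ
  -- the valuation of rho is finite
  have hrne : S.v (S.rho f n α P) ≠ ⊤ := by
    intro h
    rw [h, WithTop.mul_top (by exact_mod_cast hnQ)] at hpt
    exact WithTop.top_ne_coe hpt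
  obtain ⟨r, hr⟩ : ∃ r : ℚ, S.v (S.rho f n α P) = (r : WithTop ℚ) := by
    cases h : S.v (S.rho f n α P) with
    | top => exact absurd h hrne
    | coe q => exact ⟨q, rfl⟩
  have hnr : (n : ℚ) * r = (J : ℚ) := by
    rw [hr, ← WithTop.coe_mul] at hpt
    exact_mod_cast hpt
  -- P ≤ n
  have hPn : P ≤ n := by
    by_contra h
    push_neg at h
    have h0 : S.rho f n α P = 0 := by
      rw [PadicSetup.rho, Finset.Icc_eq_empty (by omega), Finset.sum_empty]
    rw [h0] at hrne
    exact hrne ((S.v_top_iff 0).2 rfl)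
  set g : ℕ → Ω := fun k =>
    (k.choose P : Ω) * algebraMap K Ω (f.coeff k) * α ^ ((k : ℤ) - (n : ℤ)) with hg
  have hrho : S.rho f n α P = ∑ k ∈ Finset.Icc P n, g k := rfl
  -- valuation of each term
  have hgzero : ∀ k, f.coeff k = 0 → S.v (g k) = ⊤ := by
    intro k hk
    apply (S.v_top_iff _).2
    rw [hg]
    simp [hk]
  have hterm : ∀ k, P ≤ k → f.coeff k ≠ 0 → ∃ M : ℤ,
      S.v (algebraMap K Ω (f.coeff k)) = ((M : ℚ) : WithTop ℚ) ∧
      S.v (g k) = ((((w (k.choose P) : ℚ) + (M : ℚ) + ((k : ℚ) - (n : ℚ)) * (1/n)) : ℚ)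
        : WithTop ℚ) := by
    intro k hPk hkne
    obtain ⟨M, hM⟩ := S.v_int (f.coeff k) hkne
    refine ⟨M, hM, ?_⟩
    have hC : ((k.choose P : ℕ) : Ω) = algebraMap K Ω ((k.choose P : ℕ) : K) :=
      (map_natCast _ _).symm
    have hvC : S.v ((k.choose P : ℕ) : Ω) = ((w (k.choose P) : ℚ) : WithTop ℚ) := by
      rw [hC, ← hw _ (Nat.choose_pos hPk)]
    have hvz := S.v_zpow hαne hcα ((k : ℤ) - (n : ℤ))
    rw [hg]
    simp only
    rw [S.v_mul, S.v_mul, hvC, hM, hvz, ← WithTop.coe_add, ← WithTop.coe_add]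
    congr 1
    push_cast
    ring
  -- minimizer
  obtain ⟨k0, hk0mem, hk0min⟩ := Finset.exists_min_image (Finset.Icc P n)
    (fun k => S.v (g k)) ⟨n, Finset.mem_Icc.2 ⟨hPn, le_rfl⟩⟩
  obtain ⟨hPk0, hk0n⟩ := Finset.mem_Icc.1 hk0mem
  have hk0le : S.v (g k0) ≤ (r : WithTop ℚ) := by
    rw [← hr, hrho]
    exact le_trans (Finset.le_inf fun j hj => hk0min j hj) (S.v_sum_le _ g)
  have hk0netop : S.v (g k0) ≠ ⊤ := by
    intro h
    rw [h, top_le_iff] at hk0le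
    exact WithTop.coe_ne_top hk0le
  have hf0ne : f.coeff k0 ≠ 0 := fun h => hk0netop (hgzero k0 h)
  obtain ⟨M0, hM0, hvk0⟩ := hterm k0 hPk0 hf0ne
  -- strict minimality: the valuation of rho equals that of the minimal term
  have hvrho : S.v (S.rho f n α P) = S.v (g k0) := by
    rw [hrho]
    refine S.v_sum_eq _ g k0 hk0mem hk0netop ?_
    intro j hj hjne
    obtain ⟨hPj, hjn⟩ := Finset.mem_Icc.1 hj
    rcases eq_or_ne (f.coeff j) 0 with hj0 | hj0
    · rw [hgzero j hj0]
      exact lt_top_iff_ne_top.2 hk0netop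
    · obtain ⟨Mj, hMj, hvj⟩ := hterm j hPj hj0
      refine lt_of_le_of_ne (hk0min j hj) ?_
      rw [hvk0, hvj]
      intro hEq
      have hEq' : (w (k0.choose P) : ℚ) + (M0 : ℚ) + ((k0 : ℚ) - (n : ℚ)) * (1/n)
          = (w (j.choose P) : ℚ) + (Mj : ℚ) + ((j : ℚ) - (n : ℚ)) * (1/n) := by
        exact_mod_cast hEq
      have hEqn : (n : ℚ) * ((w (k0.choose P) : ℚ) + (M0 : ℚ)) + (k0 : ℚ) - (n : ℚ)
          = (n : ℚ) * ((w (j.choose P) : ℚ) + (Mj : ℚ)) + (j : ℚ) - (n : ℚ) := by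
        rw [← key, ← key, hEq']
      have hEqZ : (n : ℤ) * ((w (k0.choose P)) + M0) + (k0 : ℤ) - (n : ℤ)
          = (n : ℤ) * ((w (j.choose P)) + Mj) + (j : ℤ) - (n : ℤ) := by
        exact_mod_cast hEqn
      have hdvd : (n : ℤ) * ((w (j.choose P)) + Mj - (w (k0.choose P)) - M0)
          = (k0 : ℤ) - (j : ℤ) := by linear_combination -hEqZ
      have := int_mul_aux (by exact_mod_cast hn) hdvd (by omega) (by omega)
      omega
  -- the key integer identity for the minimizer
  have hrk0 : r = (w (k0.choose P) : ℚ) + (M0 : ℚ) + ((k0 : ℚ) - (n : ℚ)) * (1/n) := by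
    rw [hr, hvk0] at hvrho
    exact_mod_cast hvrho
  have E0 : (n : ℤ) * (w (k0.choose P) + M0) + k0 - n = (a : ℤ) * n + b := by
    have h1 : (n : ℚ) * ((w (k0.choose P) : ℚ) + (M0 : ℚ)) + (k0 : ℚ) - (n : ℚ)
        = (a : ℚ) * n + (b : ℚ) := by
      rw [← key, ← hrk0, hnr, hJ']
    exact_mod_cast h1
  constructor
  · -- part 1: inequalities
    intro i hPi hin
    have hiIcc : i ∈ Finset.Icc P n := Finset.mem_Icc.2 ⟨hPi, by omega⟩
    rcases eq_or_ne (f.coeff i) 0 with hi0 | hi0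
    · constructor <;> intro _ <;>
        · rw [hi0, map_zero, (S.v_top_iff 0).2 rfl]
          exact le_top
    · obtain ⟨Mi, hMi, hvi⟩ := hterm i hPi hi0
      have hge : (r : WithTop ℚ) ≤ S.v (g i) := by
        rw [← hr, hvrho]
        exact hk0min i hiIcc
      have hgeQ : r ≤ (w (i.choose P) : ℚ) + (Mi : ℚ) + ((i : ℚ) - (n : ℚ)) * (1/n) := by
        rw [hvi] at hge
        exact_mod_cast hge
      have Ei : (a : ℤ) * n + b ≤ (n : ℤ) * (w (i.choose P) + Mi) + i - n := by
        have h1 := mul_le_mul_of_nonneg_left hgeQ (by positivity : (0:ℚ) ≤ (n:ℚ))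
        rw [key, hnr, hJ'] at h1
        exact_mod_cast h1
      have hbn' : (b : ℤ) ≤ (n : ℤ) - 1 := by omega
      have hin' : (i : ℤ) ≤ (n : ℤ) - 1 := by omega
      constructor
      · intro hib
        have hib' : (i : ℤ) < (b : ℤ) := by exact_mod_cast hib
        have hX : (a : ℤ) + 2 ≤ w (i.choose P) + Mi := by
          have h2 : (n : ℤ) * ((a : ℤ) + 1) < (n : ℤ) * (w (i.choose P) + Mi) := by
            nlinarith
          have := int_lt_aux (by exact_mod_cast hn) h2
          omega
        rw [hMi, WithTop.coe_le_coe]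
        have : (2 + (a : ℤ) - w (i.choose P)) ≤ Mi := by omega
        exact_mod_cast this
      · intro hbi
        have hX : (a : ℤ) + 1 ≤ w (i.choose P) + Mi := by
          have h2 : (n : ℤ) * (a : ℤ) < (n : ℤ) * (w (i.choose P) + Mi) := by
            nlinarith
          have := int_lt_aux (by exact_mod_cast hn) h2
          omega
        rw [hMi, WithTop.coe_le_coe]
        have : (1 + (a : ℤ) - w (i.choose P)) ≤ Mi := by omega
        exact_mod_cast this
  · -- part 2: equality
    intro hbne
    have hbpos : 0 < b := Nat.pos_of_ne_zero hbne
    have hk0b : k0 = b := by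
      have hdvd : (n : ℤ) * ((a : ℤ) + 1 - w (k0.choose P) - M0) = (k0 : ℤ) - (b : ℤ) := by
        linear_combination -E0
      have := int_mul_aux (by exact_mod_cast hn : (0:ℤ) < (n:ℤ)) hdvd (by omega) (by omega)
      omega
    rw [hk0b] at E0 hM0
    have hM0val : M0 = 1 + (a : ℤ) - w (b.choose P) := by
      have h2 : (n : ℤ) * (w (b.choose P) + M0) = (n : ℤ) * ((a : ℤ) + 1) := by
        linear_combination E0
      have h3 : w (b.choose P) + M0 = (a : ℤ) + 1 :=
        mul_left_cancel₀ (by exact_mod_cast hn.ne' : (n:ℤ) ≠ 0) h2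
      omega
    rw [hM0, hM0val]

end PadicSetup

/-- Let `f` be Eisenstein of degree `n` over `K` whose ramification
polygon passes through the points `(p^{s t}, J t)` for `0 ≤ t ≤ u` (i.e. `v_α(ρ_{p^{s t}})
= J t` and this point lies on the lower convex hull), where `J t = a t · n + b t` with
`0 ≤ b t ≤ n - 1`.  Then for `0 ≤ t ≤ u` and `p^{s t} ≤ i ≤ n - 1`:
`v_P(f_i) ≥ 2 + a t - v_P(C(i, p^{s t}))` if `i < b t`, and
`v_P(f_i) ≥ 1 + a t - v_P(C(i, p^{s t}))` if `i ≥ b t`; moreover if `b t ≠ 0` then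
`v_P(f_{b t}) = 1 + a t - v_P(C(b t, p^{s t}))`. -/
theorem ramification_polygon_points_determine_coefficient_valuations
    [FiniteDimensional ℚ_[p] K] [IsAlgClosed Ω] [Algebra.IsAlgebraic K Ω]
    (S : PadicSetup p K Ω)
    (w : ℕ → ℤ) (hw : ∀ m : ℕ, 0 < m → ((w m : ℚ) : WithTop ℚ) = S.v (algebraMap K Ω (m : K)))
    (f : K[X]) (n : ℕ) (hn : 0 < n) (hf : S.IsEisensteinOfDegree f n)
    (α : Ω) (hα : aeval α f = 0)
    (u : ℕ) (s J a b : ℕ → ℕ)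
    (hs0 : s 0 = 0)
    (hJab : ∀ t ≤ u, J t = a t * n + b t) (hbn : ∀ t ≤ u, b t ≤ n - 1)
    (hpoint : ∀ t ≤ u,
      ((n : ℚ) : WithTop ℚ) * S.v (S.rho f n α (p ^ s t)) = ((J t : ℚ) : WithTop ℚ)
      ∧ ∃ slope : ℚ, ∀ i ≤ n,
          ((((J t : ℚ) + slope * ((i : ℚ) - ((p ^ s t : ℕ) : ℚ)) : ℚ)) : WithTop ℚ)
            ≤ ((n : ℚ) : WithTop ℚ) * S.v (S.rho f n α i)) :
    ∀ t ≤ u,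
      (∀ i, p ^ s t ≤ i → i ≤ n - 1 →
        (i < b t →
          ((((2 + (a t : ℤ) - w (i.choose (p ^ s t)) : ℤ) : ℚ)) : WithTop ℚ)
            ≤ S.v (algebraMap K Ω (f.coeff i)))
        ∧ (b t ≤ i →
          ((((1 + (a t : ℤ) - w (i.choose (p ^ s t)) : ℤ) : ℚ)) : WithTop ℚ)
            ≤ S.v (algebraMap K Ω (f.coeff i))))
      ∧ (b t ≠ 0 →
          S.v (algebraMap K Ω (f.coeff (b t))) =
            ((((1 + (a t : ℤ) - w ((b t).choose (p ^ s t)) : ℤ) : ℚ)) : WithTop ℚ)) := by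
  intro t ht
  exact PadicSetup.core S w hw hn hf hα (p ^ s t)
    (pow_pos (Fact.out : p.Prime).pos _) (J t) (a t) (b t)
    (hJab t ht) (hbn t ht) (hpoint t ht).1
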